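/- Let E be a reflexive Banach space and J : E → E* a bounded linear map that is injective, antisymmetric, and whose inverse is bounded on its range. Then J is surjective, i.e., Ran J = E*. -/

import Mathlib

/-- If `E` is a reflexive Banach space and `J : E → E*` is a bounded linear map that is
injective, antisymmetric, and bounded below (its inverse is bounded on its range), then `J`
is surjective. -/
theorem stmt4 {E : Type*} [NormedAddCommGroup E] [NormedSpace ℝ E] [CompleteSpace E]
    (hrefl : Function.Surjective (NormedSpace.inclusionInDoubleDual ℝ E))
    (J : E →L[ℝ] StrongDual ℝ E)
    (hinj : Function.Injective J)
    (hanti : ∀ u v : E, J u v = - J v u)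
    (hbelow : ∃ c > 0, ∀ u : E, c * ‖u‖ ≤ ‖J u‖) :
    Function.Surjective J := by
  obtain ⟨c, hc, hbd⟩ := hbelow
  -- the range of J is closed
  have hanti' : AntilipschitzWith ⟨c⁻¹, by positivity⟩ J :=
    ContinuousLinearMap.antilipschitz_of_bound J (fun x => by
      change ‖x‖ ≤ c⁻¹ * ‖J x‖; rw [inv_mul_eq_div, le_div_iff₀ hc, mul_comm]
      exact hbd x)
  have hclosed : IsClosed (Set.range J) :=
    hanti'.isClosed_range J.uniformContinuous
  intro φ
  by_contra hφ
  have hφ' : φ ∉ Set.range J := by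
    intro ⟨u, hu⟩; exact hφ ⟨u, hu⟩
  -- separate φ from the closed convex set range J
  have hconv : Convex ℝ (Set.range J) := by
    have : Set.range J = (LinearMap.range (J : E →ₗ[ℝ] StrongDual ℝ E) : Submodule ℝ (StrongDual ℝ E)) := by
      ext x; simp [LinearMap.mem_range]
    rw [this]
    exact (LinearMap.range (J : E →ₗ[ℝ] StrongDual ℝ E) : Submodule ℝ (StrongDual ℝ E)).convex
  obtain ⟨f, u, hfu, hall⟩ := geometric_hahn_banach_point_closed hconv hclosed hφ'
  -- f vanishes on the range of J
  have hzero : ∀ x : E, f (J x) = 0 := by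
    intro x
    by_contra hne
    have h1 : ∀ t : ℝ, u < t * f (J x) := by
      intro t
      have := hall (J (t • x)) ⟨t • x, rfl⟩
      simpa [map_smul, smul_eq_mul] using this
    rcases lt_or_gt_of_ne hne with h | h
    · have := h1 ((u - 1) / f (J x))
      rw [div_mul_cancel₀ _ (ne_of_lt h)] at this
      linarith
    · have := h1 ((u - 1) / f (J x))
      rw [div_mul_cancel₀ _ (ne_of_gt h)] at this
      linarith
  have hu0 : u < 0 := by simpa using hall (J 0) ⟨0, rfl⟩
  -- f comes from some v in E by reflexivity
  obtain ⟨v, hv⟩ := hrefl f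
  have hJv : J v = 0 := by
    ext x
    have : f (J x) = J x v := by rw [← hv]; rfl
    have h2 : J x v = 0 := by rw [← this]; exact hzero x
    have := hanti x v
    rw [h2] at this
    simpa using this.symm
  have hv0 : v = 0 := hinj (by rw [hJv]; exact (map_zero J).symm)
  rw [hv0] at hv
  have : f φ = 0 := by rw [← hv]; simp
  linarith
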